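/- Let A be a continuous matrix-valued function on an interval I containing t₀, and equip the matrices with an operator norm induced by a vector norm, so that ‖M·N‖ ≤ ‖M‖·‖N‖. Then for every n ≥ 0 and every t ∈ I, the iterated Peano–Baker integral satisfies the bound ‖I_n(t)‖ ≤ (1/n!) · (|∫_{t₀}^t ‖A(τ)‖ dτ|)^n. -/

import Mathlib

-- Equip matrices with the operator norm induced by the `ℓ∞` vector norm; this norm is
-- submultiplicative: `‖M * N‖ ≤ ‖M‖ * ‖N‖`.
attribute [local instance] Matrix.linftyOpNormedAddCommGroup Matrix.linftyOpNormedRing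
  Matrix.linftyOpNormedAlgebra

/-- The iterated Peano–Baker integrals: `pbIter A t₀ 0 = 1` (identity matrix) and
`pbIter A t₀ (n+1) t = ∫_{t₀}^t A τ * pbIter A t₀ n τ dτ`. -/
noncomputable def pbIter {d : ℕ} (A : ℝ → Matrix (Fin d) (Fin d) ℝ) (t₀ : ℝ) :
    ℕ → ℝ → Matrix (Fin d) (Fin d) ℝ
  | 0 => fun _ => 1
  | n + 1 => fun t => ∫ τ in t₀..t, A τ * pbIter A t₀ n τ

open intervalIntegral MeasureTheory Set
open scoped Interval

/-- FTC identity: `∫_{t₀}^t B (σ∫B)^n = σ (σ∫B)^{n+1}/(n+1)` when `σ² = 1`. -/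
lemma pb_key (B : ℝ → ℝ) (hB : Continuous B) (t₀ : ℝ) (σ : ℝ) (hσ : σ * σ = 1)
    (t : ℝ) (n : ℕ) :
    ∫ τ in t₀..t, B τ * (σ * ∫ s in t₀..τ, B s) ^ n
      = σ * (σ * ∫ s in t₀..t, B s) ^ (n + 1) / (n + 1) := by
  have hG : ∀ τ : ℝ, HasDerivAt (fun u => ∫ s in t₀..u, B s) (B τ) τ := fun τ =>
    integral_hasDerivAt_right (hB.intervalIntegrable _ _)
      (hB.stronglyMeasurableAtFilter _ _) hB.continuousAt
  have hGc : Continuous fun u => ∫ s in t₀..u, B s :=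
    continuous_iff_continuousAt.2 fun τ => (hG τ).continuousAt
  have hn : ((n : ℝ) + 1) ≠ 0 := by positivity
  have hH : ∀ τ : ℝ, HasDerivAt
      (fun u => σ * (σ * ∫ s in t₀..u, B s) ^ (n + 1) / ((n : ℝ) + 1))
      (B τ * (σ * ∫ s in t₀..τ, B s) ^ n) τ := by
    intro τ
    have h1 := ((((hG τ).const_mul σ).pow (n + 1)).const_mul σ).div_const ((n : ℝ) + 1)
    have h1' : HasDerivAt
        (fun u => σ * (σ * ∫ s in t₀..u, B s) ^ (n + 1) / ((n : ℝ) + 1)) _ τ := h1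
    convert h1' using 1
    obtain rfl | rfl := mul_self_eq_one_iff.mp hσ <;> push_cast <;> field_simp <;> ring
  rw [intervalIntegral.integral_eq_sub_of_hasDerivAt (fun τ _ => hH τ)
    ((hB.mul ((continuous_const.mul hGc).pow n)).intervalIntegrable _ _)]
  simp

/-- The oriented version with absolute values, for nonnegative `B`. -/
lemma pb_key2 (B : ℝ → ℝ) (hB : Continuous B) (hB0 : ∀ x, 0 ≤ B x) (t₀ t : ℝ) (n : ℕ) :
    ∫ τ in Ι t₀ t, B τ * |∫ s in t₀..τ, B s| ^ n
      = |∫ s in t₀..t, B s| ^ (n + 1) / (n + 1) := by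
  rcases le_total t₀ t with h | h
  · rw [uIoc_of_le h, ← intervalIntegral.integral_of_le h]
    have he : Set.EqOn (fun τ => B τ * |∫ s in t₀..τ, B s| ^ n)
        (fun τ => B τ * ((1 : ℝ) * ∫ s in t₀..τ, B s) ^ n) (Set.uIcc t₀ t) := by
      intro τ hτ
      rw [Set.uIcc_of_le h] at hτ
      have h0 : 0 ≤ ∫ s in t₀..τ, B s :=
        intervalIntegral.integral_nonneg hτ.1 fun x _ => hB0 x
      simp [abs_of_nonneg h0]
    rw [intervalIntegral.integral_congr he, pb_key B hB t₀ 1 (by norm_num) t n]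
    have h0 : 0 ≤ ∫ s in t₀..t, B s := intervalIntegral.integral_nonneg h fun x _ => hB0 x
    rw [abs_of_nonneg h0]; ring
  · rw [Set.uIoc_comm, uIoc_of_le h, ← intervalIntegral.integral_of_le h]
    have hnp : ∀ τ ∈ Set.Icc t t₀, (∫ s in t₀..τ, B s) ≤ 0 := by
      intro τ hτ
      rw [intervalIntegral.integral_symm]
      simp only [neg_nonpos]
      exact intervalIntegral.integral_nonneg hτ.2 fun x _ => hB0 x
    have he : Set.EqOn (fun τ => B τ * |∫ s in t₀..τ, B s| ^ n)
        (fun τ => B τ * ((-1 : ℝ) * ∫ s in t₀..τ, B s) ^ n) (Set.uIcc t t₀) := by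
      intro τ hτ
      rw [Set.uIcc_of_le h] at hτ
      simp [abs_of_nonpos (hnp τ hτ)]
    rw [intervalIntegral.integral_congr he, intervalIntegral.integral_symm,
      pb_key B hB t₀ (-1) (by norm_num) t n,
      abs_of_nonpos (hnp t ⟨le_refl t, h⟩)]
    ring

/-- Continuity of the iterated integrals on `uIcc t₀ a`. -/
lemma pb_cont {d : ℕ} (A : ℝ → Matrix (Fin d) (Fin d) ℝ) (t₀ a : ℝ)
    (hA : ContinuousOn A (Set.uIcc t₀ a)) :
    ∀ n, ContinuousOn (pbIter A t₀ n) (Set.uIcc t₀ a)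
  | 0 => continuousOn_const
  | n + 1 => by
    have h := pb_cont A t₀ a hA n
    have hF : ContinuousOn (fun τ => A τ * pbIter A t₀ n τ) (Set.uIcc t₀ a) := hA.mul h
    show ContinuousOn (fun t => ∫ τ in t₀..t, A τ * pbIter A t₀ n τ) _
    exact intervalIntegral.continuousOn_primitive_interval' hF.intervalIntegrable
      Set.left_mem_uIcc

theorem stmt6 {d : ℕ} (hd : 1 ≤ d) (A : ℝ → Matrix (Fin d) (Fin d) ℝ)
    (I : Set ℝ) (hI : I.OrdConnected) (t₀ : ℝ) (ht₀ : t₀ ∈ I)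
    (hA : ContinuousOn A I) :
    ∀ n : ℕ, ∀ t ∈ I,
      ‖pbIter A t₀ n t‖ ≤ ((n.factorial : ℝ))⁻¹ * |∫ τ in t₀..t, ‖A τ‖| ^ n := by
  have hne : Nonempty (Fin d) := ⟨⟨0, hd⟩⟩
  intro n
  induction n with
  | zero =>
    intro t ht
    simp only [pbIter, Nat.factorial_zero, Nat.cast_one, inv_one, pow_zero, mul_one]
    rw [norm_one]
  | succ n ih =>
    intro t ht
    have hsub : Set.uIcc t₀ t ⊆ I := hI.uIcc_subset ht₀ ht
    have hAu : ContinuousOn A (Set.uIcc t₀ t) := hA.mono hsub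
    -- clamp to the interval
    set cl : ℝ → ℝ := fun τ => max (min t₀ t) (min τ (max t₀ t)) with hcl
    have hmaps : ∀ τ : ℝ, cl τ ∈ Set.uIcc t₀ t := fun τ =>
      ⟨le_max_left _ _, max_le min_le_max (min_le_right _ _)⟩
    have hclc : Continuous cl :=
      continuous_const.max (continuous_id.min continuous_const)
    set B : ℝ → ℝ := fun τ => ‖A (cl τ)‖ with hBdef
    have hBc : Continuous B := hAu.norm.comp_continuous hclc hmaps
    have hB0 : ∀ x, 0 ≤ B x := fun x => norm_nonneg _
    have hBeq : ∀ τ ∈ Set.uIcc t₀ t, B τ = ‖A τ‖ := by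
      intro τ hτ
      have h1 : min t₀ t ≤ τ := hτ.1
      have h2 : τ ≤ max t₀ t := hτ.2
      simp only [hBdef, hcl, min_eq_left h2, max_eq_right h1]
    have hgeq : ∀ τ ∈ Set.uIcc t₀ t,
        (∫ s in t₀..τ, ‖A s‖) = ∫ s in t₀..τ, B s := by
      intro τ hτ
      refine intervalIntegral.integral_congr fun s hs => ?_
      exact (hBeq s (Set.uIcc_subset_uIcc Set.left_mem_uIcc hτ hs)).symm
    have hPc : ContinuousOn (pbIter A t₀ n) (Set.uIcc t₀ t) := pb_cont A t₀ t hAu n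
    have hFc : ContinuousOn (fun τ => A τ * pbIter A t₀ n τ) (Set.uIcc t₀ t) := hAu.mul hPc
    have hGc : Continuous fun u => ∫ s in t₀..u, B s :=
      intervalIntegral.continuous_primitive (fun a b => hBc.intervalIntegrable a b) t₀
    have hRHSc : Continuous fun τ => B τ * ((n.factorial : ℝ)⁻¹ * |∫ s in t₀..τ, B s| ^ n) :=
      hBc.mul (continuous_const.mul ((hGc.abs).pow n))
    have key : ‖pbIter A t₀ (n + 1) t‖
        ≤ ∫ τ in Ι t₀ t, B τ * ((n.factorial : ℝ)⁻¹ * |∫ s in t₀..τ, B s| ^ n) := by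
      refine le_trans intervalIntegral.norm_integral_le_integral_norm_uIoc ?_
      refine setIntegral_mono_on
        (intervalIntegrable_iff.mp hFc.intervalIntegrable.norm)
        (intervalIntegrable_iff.mp (hRHSc.intervalIntegrable t₀ t))
        measurableSet_uIoc ?_
      intro τ hτ
      have hτ' : τ ∈ Set.uIcc t₀ t := Set.uIoc_subset_uIcc hτ
      calc ‖A τ * pbIter A t₀ n τ‖ ≤ ‖A τ‖ * ‖pbIter A t₀ n τ‖ := norm_mul_le _ _
        _ ≤ ‖A τ‖ * ((n.factorial : ℝ)⁻¹ * |∫ s in t₀..τ, ‖A s‖| ^ n) :=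
            mul_le_mul_of_nonneg_left (ih τ (hsub hτ')) (norm_nonneg _)
        _ = B τ * ((n.factorial : ℝ)⁻¹ * |∫ s in t₀..τ, B s| ^ n) := by
            rw [hBeq τ hτ', hgeq τ hτ']
    have hrw : (∫ τ in Ι t₀ t, B τ * ((n.factorial : ℝ)⁻¹ * |∫ s in t₀..τ, B s| ^ n))
        = (n.factorial : ℝ)⁻¹ * ∫ τ in Ι t₀ t, B τ * |∫ s in t₀..τ, B s| ^ n := by
      rw [← MeasureTheory.integral_const_mul]
      congr 1
      funext τ
      ring
    rw [hrw, pb_key2 B hBc hB0 t₀ t n] at key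
    refine key.trans (le_of_eq ?_)
    rw [hgeq t Set.right_mem_uIcc, Nat.factorial_succ]
    have h1 : ((n.factorial : ℝ)) ≠ 0 := by positivity
    have h2 : ((n : ℝ) + 1) ≠ 0 := by positivity
    push_cast
    rw [mul_inv]
    ring
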